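/- arXiv:1810.03329 — 4 statements merged into one kernel-verified Lean document; each statement's English description precedes it below -/
import Mathlib

section
/- For any commutative ring R with 1, ideal I, and n ≥ 3: if ε ∈ E_n(R, I), then there exists ε̃ ∈ E_n(R ⊕ I) with φ(ε̃) = ε, where φ is applied entrywise. -/
/-- The set of elementary generators `e_{ij}(x)`, `x ∈ J`, inside the units of the
matrix ring. -/
def elemGens (n : ℕ) (S : Type) [CommRing S] (J : Ideal S) :
    Set (Matrix (Fin n) (Fin n) S)ˣ :=
  {g | ∃ i j : Fin n, i ≠ j ∧ ∃ x ∈ J,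
    (g : Matrix (Fin n) (Fin n) S) = 1 + Matrix.single i j x}

/-- The elementary subgroup `E_n(S)`. -/
def En (n : ℕ) (S : Type) [CommRing S] : Subgroup (Matrix (Fin n) (Fin n) S)ˣ :=
  Subgroup.closure (elemGens n S ⊤)

/-- The relative elementary subgroup `E_n(S, J)`: the normal closure of `E_n(J)`
in `E_n(S)`. -/
def relEn (n : ℕ) (S : Type) [CommRing S] (J : Ideal S) :
    Subgroup (Matrix (Fin n) (Fin n) S)ˣ :=
  Subgroup.closure
    {h | ∃ ε ∈ En n S, ∃ g ∈ Subgroup.closure (elemGens n S J), h = ε * g * ε⁻¹}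

/-- An elementary matrix as a unit. -/
def elemUnit {n : ℕ} {S : Type} [CommRing S] {i j : Fin n} (hij : i ≠ j) (x : S) :
    (Matrix (Fin n) (Fin n) S)ˣ where
  val := 1 + Matrix.single i j x
  inv := 1 - Matrix.single i j x
  val_inv := by
    have h : Matrix.single i j x * Matrix.single i j x = 0 :=
      Matrix.single_mul_single_of_ne (c := x) i j i hij.symm x
    have e : (1 + Matrix.single i j x) * (1 - Matrix.single i j x)
        = 1 - Matrix.single i j x * Matrix.single i j x := by
      noncomm_ring
    rw [e, h, sub_zero]
  inv_val := by
    have h : Matrix.single i j x * Matrix.single i j x = 0 :=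
      Matrix.single_mul_single_of_ne (c := x) i j i hij.symm x
    have e : (1 - Matrix.single i j x) * (1 + Matrix.single i j x)
        = 1 - Matrix.single i j x * Matrix.single i j x := by
      noncomm_ring
    rw [e, h, sub_zero]

@[simp] lemma elemUnit_val {n : ℕ} {S : Type} [CommRing S] {i j : Fin n}
    (hij : i ≠ j) (x : S) :
    ((elemUnit hij x : (Matrix (Fin n) (Fin n) S)ˣ) : Matrix (Fin n) (Fin n) S)
      = 1 + Matrix.single i j x := rfl

lemma elemUnit_mem_En {n : ℕ} {S : Type} [CommRing S] {i j : Fin n} (hij : i ≠ j)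
    (x : S) : elemUnit hij x ∈ En n S :=
  Subgroup.subset_closure ⟨i, j, hij, x, trivial, rfl⟩

lemma map_stdBasisMatrix {n : ℕ} {S T : Type} [CommRing S] [CommRing T]
    (ψ : S →+* T) (i j : Fin n) (x : S) :
    (Matrix.single i j x).map ⇑ψ = Matrix.single i j (ψ x) := by
  ext a b
  simp [Matrix.single, Matrix.map_apply, apply_ite ψ]

/-- Every `ε ∈ E_n(R, I)` lifts along the entrywise excision map
`φ` to some `ε̃ ∈ E_n(R ⊕ I)`. -/
theorem relElementary_lifts_to_excision (n : ℕ) (hn : 3 ≤ n) (R : Type) [CommRing R]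
    (I : Ideal R) [inst : CommRing (R × ↥I)]
    (hadd : ∀ a b : R × ↥I, a + b = (a.1 + b.1, a.2 + b.2))
    (hmul : ∀ a b : R × ↥I, (a * b).1 = a.1 * b.1 ∧
      ((a * b).2 : R) = b.1 * (a.2 : R) + a.1 * (b.2 : R) + (a.2 : R) * (b.2 : R))
    (hone : (1 : R × ↥I).1 = 1 ∧ ((1 : R × ↥I).2 : R) = 0)
    (φ : (R × ↥I) →+* R) (hφ : ∀ a : R × ↥I, φ a = a.1 + (a.2 : R))
    (ε : (Matrix (Fin n) (Fin n) R)ˣ) (hε : ε ∈ relEn n R I) :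
    ∃ ε' ∈ En n (R × ↥I),
      ((ε' : Matrix (Fin n) (Fin n) (R × ↥I)).map ⇑φ) =
        (ε : Matrix (Fin n) (Fin n) R) := by
  classical
  set Φ : (Matrix (Fin n) (Fin n) (R × ↥I))ˣ →* (Matrix (Fin n) (Fin n) R)ˣ :=
    Units.map (RingHom.mapMatrix φ).toMonoidHom with hΦ
  -- Φ of a unit has value the entrywise map
  have hΦval : ∀ u : (Matrix (Fin n) (Fin n) (R × ↥I))ˣ,
      ((Φ u : (Matrix (Fin n) (Fin n) R)ˣ) : Matrix (Fin n) (Fin n) R)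
        = (u : Matrix (Fin n) (Fin n) (R × ↥I)).map ⇑φ := fun u => rfl
  -- Φ of an elementary unit
  have hΦelem : ∀ (i j : Fin n) (hij : i ≠ j) (a : R × ↥I),
      Φ (elemUnit hij a) = elemUnit hij (φ a) := by
    intro i j hij a
    apply Units.ext
    rw [hΦval, elemUnit_val, elemUnit_val]
    ext a b
    simp [Matrix.map_apply, Matrix.add_apply, Matrix.one_apply,
      Matrix.single, Matrix.of_apply, apply_ite φ]
  suffices h : ε ∈ (En n (R × ↥I)).map Φ by
    obtain ⟨ε', hε', hval⟩ := h
    exact ⟨ε', hε', by rw [← hΦval ε', hval]⟩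
  -- E_n(R) lifts
  have hEn : En n R ≤ (En n (R × ↥I)).map Φ := by
    rw [En, Subgroup.closure_le]
    rintro g ⟨i, j, hij, x, -, hg⟩
    refine ⟨elemUnit hij (x, 0), elemUnit_mem_En hij _, ?_⟩
    rw [hΦelem i j hij (x, 0)]
    apply Units.ext
    have : φ ((x, 0) : R × ↥I) = x := by
      rw [hφ]; simp
    rw [hg, elemUnit_val, this]
  -- E_n(I) lifts
  have hEnI : Subgroup.closure (elemGens n R I) ≤ (En n (R × ↥I)).map Φ := by
    rw [Subgroup.closure_le]
    rintro g ⟨i, j, hij, x, hx, hg⟩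
    refine ⟨elemUnit hij (0, ⟨x, hx⟩), elemUnit_mem_En hij _, ?_⟩
    rw [hΦelem i j hij (0, ⟨x, hx⟩)]
    apply Units.ext
    have : φ ((0, ⟨x, hx⟩) : R × ↥I) = x := by
      rw [hφ]; simp
    rw [hg, elemUnit_val, this]
  -- conclude
  rw [relEn] at hε
  refine Subgroup.closure_le _ |>.mpr ?_ hε
  rintro h ⟨ε₀, hε₀, g, hg, rfl⟩
  exact mul_mem (mul_mem (hEn hε₀) (hEnI hg)) (inv_mem (hEn hε₀))
end

section
/- Let R be a commutative Noetherian ring and s ∈ R. Then there exists a natural number k such that the canonical map GL_n(R, s^k R) → GL_n(R_s) induced by localization at s is injective. -/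
/-- for a Noetherian commutative ring `R` and `s ∈ R`, there is a
`k` such that the localization map `GL_n(R, s^k R) → GL_n(R_s)` is injective. -/
theorem localization_injective_on_congruence (R : Type) [CommRing R]
    [IsNoetherianRing R] (s : R) (n : ℕ) :
    ∃ k : ℕ, Set.InjOn
      (Units.map ((algebraMap R (Localization.Away s)).mapMatrix.toMonoidHom :
        Matrix (Fin n) (Fin n) R →* Matrix (Fin n) (Fin n) (Localization.Away s)))
      {α : (Matrix (Fin n) (Fin n) R)ˣ | ∀ i j : Fin n,
        (α : Matrix (Fin n) (Fin n) R) i j - (1 : Matrix (Fin n) (Fin n) R) i j ∈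
          Ideal.span {s ^ k}} := by
  -- the chain of annihilators of powers of s
  set f : ℕ →o Ideal R :=
    ⟨fun i => LinearMap.ker (LinearMap.toSpanSingleton R R (s ^ i)), by
      intro i j hij x hx
      simp only [LinearMap.mem_ker, LinearMap.toSpanSingleton_apply, smul_eq_mul] at *
      obtain ⟨d, rfl⟩ := Nat.exists_eq_add_of_le hij
      rw [pow_add, ← mul_assoc, hx, zero_mul]⟩ with hf
  obtain ⟨k, hk⟩ := monotone_stabilizes_iff_noetherian.mpr ‹IsNoetherianRing R› f
  refine ⟨k, ?_⟩
  -- key: an element of span {s^k} mapping to 0 in R_s is 0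
  have key : ∀ x : R, x ∈ Ideal.span {s ^ k} →
      algebraMap R (Localization.Away s) x = 0 → x = 0 := by
    intro x hx hx0
    obtain ⟨c, rfl⟩ := Ideal.mem_span_singleton.mp hx
    obtain ⟨⟨m, hm⟩, hmx⟩ :=
      (IsLocalization.map_eq_zero_iff (Submonoid.powers s) (Localization.Away s) _).mp hx0
    obtain ⟨N, rfl⟩ := hm
    have hc : c ∈ f (k + N) := by
      simp only [hf, OrderHom.coe_mk, LinearMap.mem_ker, LinearMap.toSpanSingleton_apply,
        smul_eq_mul]
      show c * s ^ (k + N) = 0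
      have := hmx
      ring_nf at this ⊢
      linear_combination this
    rw [← hk (k + N) (Nat.le_add_right _ _)] at hc
    simp only [hf, OrderHom.coe_mk, LinearMap.mem_ker, LinearMap.toSpanSingleton_apply,
      smul_eq_mul] at hc
    rw [mul_comm]; exact hc
  intro α hα β hβ h
  ext i j : 2
  have hval : ((algebraMap R (Localization.Away s)).mapMatrix (α : Matrix (Fin n) (Fin n) R))
      = (algebraMap R (Localization.Away s)).mapMatrix (β : Matrix (Fin n) (Fin n) R) :=
    congrArg Units.val h
  have hij : algebraMap R (Localization.Away s) ((α : Matrix (Fin n) (Fin n) R) i j)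
      = algebraMap R (Localization.Away s) ((β : Matrix (Fin n) (Fin n) R) i j) :=
    congrFun (congrFun hval i) j
  have hsub : (α : Matrix (Fin n) (Fin n) R) i j - (β : Matrix (Fin n) (Fin n) R) i j
      ∈ Ideal.span {s ^ k} := by
    have := Ideal.sub_mem _ (hα i j) (hβ i j)
    simpa using this
  have := key _ hsub (by rw [map_sub, hij, sub_self])
  exact sub_eq_zero.mp this
end

section
/- Let R be a commutative ring, I an ideal, n ≥ 3. If E_n(R,I) is a normal subgroup of GL_n(R), then for every v ∈ GL_n(R)·e_1 with v ≡ e_1 mod I and every w ∈ I^n with w^t v = 0, the matrix I_n + v·w^t lies in E_n(R,I). -/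
open Matrix

section Helpers

variable {n : ℕ} {R : Type} [CommRing R]

lemma vmv_mul_vmv (v w v' w' : Fin n → R) (h : dotProduct w v' = 0) :
    vecMulVec v w * vecMulVec v' w' = 0 := by
  ext i j
  simp only [mul_apply, vecMulVec_apply, Matrix.zero_apply]
  have h1 : ∑ k, v i * w k * (v' k * w' j) = v i * w' j * ∑ k, w k * v' k := by
    rw [Finset.mul_sum]; exact Finset.sum_congr rfl fun k _ => by ring
  rw [h1, show ∑ k, w k * v' k = dotProduct w v' from rfl, h, mul_zero]

lemma mul_vmv (A : Matrix (Fin n) (Fin n) R) (v w : Fin n → R) :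
    A * vecMulVec v w = vecMulVec (A.mulVec v) w := by
  ext i j
  simp only [mul_apply, vecMulVec_apply, mulVec, dotProduct]
  rw [Finset.sum_mul]
  exact Finset.sum_congr rfl fun k _ => by ring

lemma vmv_mul (A : Matrix (Fin n) (Fin n) R) (v w : Fin n → R) :
    vecMulVec v w * A = vecMulVec v (Matrix.vecMul w A) := by
  ext i j
  simp only [mul_apply, vecMulVec_apply, vecMul, dotProduct]
  rw [Finset.mul_sum]
  exact Finset.sum_congr rfl fun k _ => by ring

lemma vmv_add (v w w' : Fin n → R) :
    vecMulVec v (w + w') = vecMulVec v w + vecMulVec v w' := by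
  ext i j
  simp [vecMulVec_apply, mul_add]

/-- A transvection-type unit `1 + v wᵗ` when `wᵗ v = 0`. -/
def transvUnit (v w : Fin n → R) (h : dotProduct w v = 0) :
    (Matrix (Fin n) (Fin n) R)ˣ where
  val := 1 + vecMulVec v w
  inv := 1 - vecMulVec v w
  val_inv := by
    have key := vmv_mul_vmv v w v w h
    have h2 : (1 + vecMulVec v w) * (1 - vecMulVec v w)
        = 1 - vecMulVec v w * vecMulVec v w := by noncomm_ring
    rw [h2, key, sub_zero]
  inv_val := by
    have key := vmv_mul_vmv v w v w h
    have h2 : (1 - vecMulVec v w) * (1 + vecMulVec v w)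
        = 1 - vecMulVec v w * vecMulVec v w := by noncomm_ring
    rw [h2, key, sub_zero]

lemma single_dot_single (a i₀ : Fin n) (x : R) (h : a ≠ i₀) :
    dotProduct (Pi.single a x) (Pi.single i₀ (1 : R)) = 0 := by
  simp only [dotProduct, Pi.single_apply, ite_mul, zero_mul, mul_ite, mul_zero]
  refine Finset.sum_eq_zero fun k _ => ?_
  split_ifs with h1 h2
  · exact absurd (h2.symm.trans h1) h
  · rfl
  · rfl

lemma vmv_single_single (i₀ a : Fin n) (x : R) :
    vecMulVec (Pi.single i₀ (1 : R)) (Pi.single a x) = Matrix.single i₀ a x := by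
  ext i j
  simp only [vecMulVec_apply, Pi.single_apply, Matrix.single, of_apply]
  split_ifs <;> simp_all

lemma rowTrans_mem (I : Ideal R) (i₀ : Fin n) (u : Fin n → R)
    (hu0 : u i₀ = 0) (huI : ∀ k, u k ∈ I) :
    ∃ g ∈ Subgroup.closure (elemGens n R I),
      (g : Matrix (Fin n) (Fin n) R) = 1 + vecMulVec (Pi.single i₀ 1) u := by
  suffices H : ∀ s : Finset (Fin n), ∀ u : Fin n → R, (∀ k ∉ s, u k = 0) →
      u i₀ = 0 → (∀ k, u k ∈ I) →
      ∃ g ∈ Subgroup.closure (elemGens n R I),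
        (g : Matrix (Fin n) (Fin n) R) = 1 + vecMulVec (Pi.single i₀ 1) u by
    exact H Finset.univ u (fun k hk => absurd (Finset.mem_univ k) hk) hu0 huI
  intro s
  induction s using Finset.induction_on with
  | empty =>
    intro u hsupp hu0 huI
    refine ⟨1, one_mem _, ?_⟩
    have : u = 0 := funext fun k => hsupp k (by simp)
    ext i j
    simp [this, vecMulVec_apply]
  | @insert a s ha IH =>
    intro u hsupp hu0 huI
    by_cases hai : a = i₀
    · refine IH u (fun k hk => ?_) hu0 huI
      by_cases hka : k = a
      · rw [hka, hai]; exact hu0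
      · exact hsupp k (by simp [hka, hk])
    · set u' : Fin n → R := Function.update u a 0 with hu'
      obtain ⟨g', hg'mem, hg'⟩ := IH u'
        (fun k hk => by
          by_cases hka : k = a
          · simp [hu', hka]
          · simp only [hu', Function.update_of_ne hka]
            exact hsupp k (by simp [hka, hk]))
        (by rw [hu', Function.update_of_ne (fun h => hai h.symm)]; exact hu0)
        (fun k => by
          by_cases hka : k = a
          · simp [hu', hka]
          · simpa [hu', Function.update_of_ne hka] using huI k)
      have hdot : dotProduct (Pi.single a (u a)) (Pi.single i₀ (1 : R)) = 0 :=
        single_dot_single a i₀ (u a) hai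
      refine ⟨transvUnit (Pi.single i₀ 1) (Pi.single a (u a)) hdot * g',
        mul_mem (Subgroup.subset_closure ⟨i₀, a, fun h => hai h.symm, u a, huI a, by
          show (1 : Matrix (Fin n) (Fin n) R) + vecMulVec (Pi.single i₀ 1) (Pi.single a (u a))
            = _
          rw [vmv_single_single]⟩) hg'mem, ?_⟩
      have hsplit : Pi.single a (u a) + u' = u := by
        funext k
        by_cases hka : k = a
        · simp [hu', hka]
        · simp [hu', Pi.single_apply, hka, Function.update_of_ne hka]
      have hcross := vmv_mul_vmv (Pi.single i₀ (1:R)) (Pi.single a (u a))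
        (Pi.single i₀ (1:R)) u' hdot
      show (1 + vecMulVec (Pi.single i₀ 1) (Pi.single a (u a)))
          * (g' : Matrix (Fin n) (Fin n) R) = _
      rw [hg']
      have expand : (1 + vecMulVec (Pi.single i₀ (1:R)) (Pi.single a (u a)))
          * (1 + vecMulVec (Pi.single i₀ 1) u')
          = 1 + vecMulVec (Pi.single i₀ 1) (Pi.single a (u a))
            + vecMulVec (Pi.single i₀ 1) u'
            + vecMulVec (Pi.single i₀ 1) (Pi.single a (u a))
              * vecMulVec (Pi.single i₀ 1) u' := by
        noncomm_ring
      rw [expand, hcross, add_zero, add_assoc, ← vmv_add, hsplit]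

end Helpers

/-- if `E_n(R,I)` is normal in `GL_n(R)`, then for every
`v ∈ GL_n(R)·e_1` with `v ≡ e_1 mod I` and `w ∈ I^n` with `wᵗv = 0`, one has
`I_n + v·wᵗ ∈ E_n(R,I)`. -/
theorem normality_implies_transvection (n : ℕ) (hn : 3 ≤ n) (R : Type)
    [CommRing R] (I : Ideal R)
    (hnormal : (relEn n R I).Normal)
    (v w : Fin n → R)
    (hv : ∃ γ : (Matrix (Fin n) (Fin n) R)ˣ,
      v = (γ : Matrix (Fin n) (Fin n) R).mulVec (Pi.single (⟨0, by omega⟩ : Fin n) 1))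
    (hvI : ∀ k : Fin n, v k - (Pi.single (⟨0, by omega⟩ : Fin n) (1 : R) : Fin n → R) k ∈ I)
    (hw : ∀ k, w k ∈ I)
    (hvw : dotProduct w v = 0) :
    ∃ g ∈ relEn n R I,
      (g : Matrix (Fin n) (Fin n) R) = 1 + Matrix.vecMulVec v w := by
  obtain ⟨γ, hγ⟩ := hv
  set i₀ : Fin n := ⟨0, by omega⟩
  set u : Fin n → R := Matrix.vecMul w (γ : Matrix (Fin n) (Fin n) R) with hu
  have hu0 : u i₀ = 0 := by
    rw [← hvw, hγ]
    simp [hu, Matrix.vecMul, Matrix.mulVec, dotProduct, Pi.single_apply,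
      Finset.sum_ite_eq']
  have huI : ∀ k, u k ∈ I := fun k => by
    simp only [hu, Matrix.vecMul, dotProduct]
    exact Ideal.sum_mem I fun j _ => I.mul_mem_right _ (hw j)
  obtain ⟨g₀, hg₀mem, hg₀⟩ := rowTrans_mem I i₀ u hu0 huI
  have hg₀rel : g₀ ∈ relEn n R I :=
    Subgroup.subset_closure ⟨1, one_mem _, g₀, hg₀mem, by simp⟩
  refine ⟨γ * g₀ * γ⁻¹, hnormal.conj_mem g₀ hg₀rel γ, ?_⟩
  have : ((γ * g₀ * γ⁻¹ : (Matrix (Fin n) (Fin n) R)ˣ) : Matrix (Fin n) (Fin n) R)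
      = (γ : Matrix (Fin n) (Fin n) R) * (g₀ : Matrix (Fin n) (Fin n) R)
        * ((γ⁻¹ : (Matrix (Fin n) (Fin n) R)ˣ) : Matrix (Fin n) (Fin n) R) := by
    simp [Units.val_mul]
  rw [this, hg₀, mul_add, mul_one, add_mul, mul_vmv, vmv_mul, ← hγ]
  have hw' : Matrix.vecMul u ((γ⁻¹ : (Matrix (Fin n) (Fin n) R)ˣ) : Matrix (Fin n) (Fin n) R)
      = w := by
    rw [hu, Matrix.vecMul_vecMul, γ.mul_inv, Matrix.vecMul_one]
  rw [hw', γ.mul_inv]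
end

section
/- Let R be a commutative ring, I an ideal, n ≥ 3, and let α(X) ∈ GL_n(R[X]) with α(X) ≡ I_n mod I[X] and α(0) = I_n. Suppose for some non-nilpotent s ∈ R the conclusion α(bX) ∈ E_n(R[X], I[X]) holds for all b ∈ s^l R with l ≫ 0 (Dilation). Then from such dilation data over a finite cover s_1, …, s_r with (s_1, …, s_r) = R and b_1 + ⋯ + b_r = 1, b_i ∈ s_i^l R, one obtains the factorization α(X) = (∏_{i=1}^{r−1} θ(b_i X, T)|_{T = b_{i+1}X + ⋯ + b_r X}) · θ(b_r X, 0), where θ(X,T) = α(X+T)·α(T)^{-1}. -/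
open Polynomial

/-- Substitution `X ↦ p` applied entrywise to an invertible matrix of
polynomials: `α(X) ↦ α(p)`. -/
noncomputable def evalGL (n : ℕ) (R : Type) [CommRing R]
    (α : (Matrix (Fin n) (Fin n) R[X])ˣ) (p : R[X]) :
    (Matrix (Fin n) (Fin n) R[X])ˣ :=
  Units.map ((aeval p).toRingHom.mapMatrix.toMonoidHom) α

/-- `θ(X,T) = α(X+T)·α(T)⁻¹`, evaluated at polynomials `p`, `q`. -/
noncomputable def theta (n : ℕ) (R : Type) [CommRing R]
    (α : (Matrix (Fin n) (Fin n) R[X])ˣ) (p q : R[X]) :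
    (Matrix (Fin n) (Fin n) R[X])ˣ :=
  evalGL n R α (p + q) * (evalGL n R α q)⁻¹

/-- the telescoping factorization
`α(X) = (∏_{i=1}^{r-1} θ(b_i X, T)|_{T=b_{i+1}X+⋯+b_rX}) · θ(b_r X, 0)`
obtained from dilation data over a finite cover `s_1, …, s_r`. -/
theorem dilation_telescoping_factorization (n : ℕ) (hn : 3 ≤ n) (R : Type)
    [CommRing R] (I : Ideal R)
    (α : (Matrix (Fin n) (Fin n) R[X])ˣ)
    (hαI : ∀ i j : Fin n, ∀ k : ℕ,
      (((α : Matrix (Fin n) (Fin n) R[X]) - 1) i j).coeff k ∈ I)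
    (hα0 : evalGL n R α 0 = 1)
    (r l : ℕ) (hr : 1 ≤ r) (s b : ℕ → R)
    (hs : ∀ i, i < r → ∀ m : ℕ, s i ^ m ≠ 0)
    (hcover : Ideal.span {x : R | ∃ i, i < r ∧ x = s i} = ⊤)
    (hb : ∀ i, i < r → b i ∈ Ideal.span {s i ^ l})
    (hsum : ∑ i ∈ Finset.range r, b i = 1)
    (hdil : ∀ i, i < r → ∀ c ∈ Ideal.span {s i ^ l},
      evalGL n R α (C c * X) ∈ relEn n R[X] (I.map (C : R →+* R[X]))) :
    α = ((List.range (r - 1)).map fun i =>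
        theta n R α (C (b i) * X)
          (C (∑ j ∈ Finset.Ico (i + 1) r, b j) * X)).prod *
      theta n R α (C (b (r - 1)) * X) 0 := by
  classical
  set F : ℕ → (Matrix (Fin n) (Fin n) R[X])ˣ :=
    fun i => evalGL n R α (C (∑ j ∈ Finset.Ico i r, b j) * X) with hF
  have hterm : ∀ m, m < r →
      theta n R α (C (b m) * X) (C (∑ j ∈ Finset.Ico (m + 1) r, b j) * X)
        = F m * (F (m + 1))⁻¹ := by
    intro m hm
    have hsplit : (∑ j ∈ Finset.Ico m r, b j)
        = b m + ∑ j ∈ Finset.Ico (m + 1) r, b j :=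
      Finset.sum_eq_sum_Ico_succ_bot hm _
    simp only [theta, hF, hsplit, C_add, add_mul]
  have key : ∀ m, m ≤ r - 1 →
      ((List.range m).map fun i =>
        theta n R α (C (b i) * X)
          (C (∑ j ∈ Finset.Ico (i + 1) r, b j) * X)).prod
        = F 0 * (F m)⁻¹ := by
    intro m hm
    induction m with
    | zero => simp
    | succ k ih =>
      have hk : k ≤ r - 1 := Nat.le_of_succ_le hm
      have hkr : k < r := lt_of_lt_of_le (Nat.lt_succ_self k)
        (le_trans hm (Nat.sub_le r 1))
      rw [List.range_succ, List.map_append, List.prod_append, ih hk]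
      simp only [List.map_cons, List.map_nil, List.prod_cons, List.prod_nil,
        mul_one]
      rw [hterm k hkr, mul_assoc, inv_mul_cancel_left]
  have hlast : theta n R α (C (b (r - 1)) * X) 0 = F (r - 1) := by
    have h1 : Finset.Ico (r - 1) r = {r - 1} := by
      have : r = (r - 1) + 1 := (Nat.succ_pred_eq_of_pos hr).symm
      rw [this]; simp
    simp only [theta, hF, h1, Finset.sum_singleton, add_zero, hα0, inv_one,
      mul_one]
  have hF0 : F 0 = α := by
    have h1 : (∑ j ∈ Finset.Ico 0 r, b j) = 1 := by
      rw [← Finset.range_eq_Ico]; exact hsum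
    have hX : evalGL n R α X = α := by
      ext i j : 4
      show ((Matrix.map (α : Matrix (Fin n) (Fin n) R[X])
        (aeval X : R[X] →ₐ[R] R[X])) i j).coeff _ = _
      rw [Matrix.map_apply, aeval_X_left_apply]
    simp only [hF, h1, map_one, one_mul]
    exact hX
  rw [key (r - 1) le_rfl, hlast, mul_assoc, inv_mul_cancel, mul_one, hF0]
end
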